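/- Let O be a DVR with fraction field K and residue field κ, H a commutative O-algebra acting on O-modules, p a prime ideal of H with H/p ≅ O, and M a finite O-module with H-action such that M[p] is free of rank 1 over O and M/M[p] is torsion-free. If additionally dim_κ (M/π)[m] = 1 where m = (π, p), then the natural map M[p]/π → (M/π)[m] is an isomorphism. -/

import Mathlib

/-- Abstract form of "Fil f mod pi (2)".  Let `O` be a DVR with uniformizer `π`, `H` a
commutative `O`-algebra, `p` a prime ideal of `H` with `H/p ≅ O` (realized by a surjection
`ψ : H → O` with kernel `p`), and `M` a finite `O`-module with `H`-action such that the
`p`-torsion `M[p]` is free of rank `1` over `O` (generated by `x₀`) and `M/M[p]` is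
torsion-free.  If moreover `(M/π)[m]` is one-dimensional over `κ` for `m = p + (π)` (generated
by `xbar`), then the natural map `M[p]/π → (M/π)[m]` is an isomorphism: it is surjective (its
range is all of `(M/π)[m]`) and injective (any element of `M[p]` divisible by `π` in `M` is
divisible by `π` inside `M[p]`). -/
theorem torsion_part_mod_pi_iso
    {O H M : Type*} [CommRing O] [IsDomain O] [IsDiscreteValuationRing O]
    (π : O) (hπ : Irreducible π)
    [CommRing H] [Algebra O H]
    [AddCommGroup M] [Module O M] [Module H M] [IsScalarTower O H M]
    [Module.Finite O M]
    (p : Ideal H) (hp : p.IsPrime)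
    (ψ : H →+* O) (hψ : Function.Surjective ψ) (hker : RingHom.ker ψ = p)
    (x₀ : M) (hx₀ : x₀ ∈ Submodule.torsionBySet H M (p : Set H))
    (hgen : ∀ y ∈ Submodule.torsionBySet H M (p : Set H), ∃ c : O, y = c • x₀)
    (hfree : ∀ c : O, c • x₀ = 0 → c = 0)
    (hquot : ∀ (c : O) (m : M), c ≠ 0 → c • m ∈ Submodule.torsionBySet H M (p : Set H) →
      m ∈ Submodule.torsionBySet H M (p : Set H))
    (mI : Ideal H) (hmI : mI = p ⊔ Ideal.span {algebraMap O H π})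
    (xbar : M ⧸ (Ideal.span {algebraMap O H π} • (⊤ : Submodule H M)))
    (hxbar : xbar ∈ Submodule.torsionBySet H
      (M ⧸ (Ideal.span {algebraMap O H π} • (⊤ : Submodule H M))) (mI : Set H))
    (hxbar0 : xbar ≠ 0)
    (hdim : ∀ y ∈ Submodule.torsionBySet H
        (M ⧸ (Ideal.span {algebraMap O H π} • (⊤ : Submodule H M))) (mI : Set H),
      ∃ c : O, y = c • xbar) :
    (LinearMap.range
        ((Submodule.mkQ (Ideal.span {algebraMap O H π} • (⊤ : Submodule H M))).comp
          (Submodule.torsionBySet H M (p : Set H)).subtype)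
      = Submodule.torsionBySet H
          (M ⧸ (Ideal.span {algebraMap O H π} • (⊤ : Submodule H M))) (mI : Set H))
    ∧ ∀ y ∈ Submodule.torsionBySet H M (p : Set H),
        (∃ z : M, y = algebraMap O H π • z) →
        ∃ w ∈ Submodule.torsionBySet H M (p : Set H), y = algebraMap O H π • w := by
  have hπ0 : π ≠ 0 := hπ.ne_zero
  -- image of torsion submodule lands in (M/π)[m]
  have hsub : ∀ y ∈ Submodule.torsionBySet H M (p : Set H),
      (Submodule.mkQ (Ideal.span {algebraMap O H π} • (⊤ : Submodule H M))) y ∈ Submodule.torsionBySet H (M ⧸ (Ideal.span {algebraMap O H π} • (⊤ : Submodule H M))) (mI : Set H) := by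
    intro y hy
    rw [Submodule.mem_torsionBySet_iff] at hy ⊢
    rintro ⟨a, ha⟩
    rw [hmI] at ha
    obtain ⟨b, hb, c, hc, rfl⟩ := Submodule.mem_sup.mp ha
    have h1 : (b + c) • (Submodule.mkQ (Ideal.span {algebraMap O H π} • (⊤ : Submodule H M))) y = (Submodule.mkQ (Ideal.span {algebraMap O H π} • (⊤ : Submodule H M))) ((b + c) • y) := rfl
    rw [h1, add_smul]
    have hby : b • y = 0 := hy ⟨b, hb⟩
    have hcy : c • y ∈ (Ideal.span {algebraMap O H π} • (⊤ : Submodule H M)) := Submodule.smul_mem_smul hc Submodule.mem_top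
    rw [hby, zero_add]
    exact (Submodule.Quotient.mk_eq_zero (Ideal.span {algebraMap O H π} • (⊤ : Submodule H M))).mpr hcy
  -- membership means divisible by π
  have hNmem : ∀ m : M, m ∈ (Ideal.span {algebraMap O H π} • (⊤ : Submodule H M)) → ∃ z : M, m = π • z := by
    intro m hm
    rw [Submodule.ideal_span_singleton_smul] at hm
    obtain ⟨z, -, hz⟩ := hm
    exact ⟨z, by rw [← hz]; simp [algebraMap_smul]⟩
  -- x₀ mod π is nonzero
  have hx₀bar0 : (Submodule.mkQ (Ideal.span {algebraMap O H π} • (⊤ : Submodule H M))) x₀ ≠ 0 := by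
    intro h0
    rw [Submodule.mkQ_apply, Submodule.Quotient.mk_eq_zero] at h0
    obtain ⟨z, hz⟩ := hNmem x₀ h0
    have hzmem : z ∈ Submodule.torsionBySet H M (p : Set H) := by
      refine hquot π z hπ0 ?_
      rw [← hz]; exact hx₀
    obtain ⟨c, hc⟩ := hgen z hzmem
    have h2 : (1 - π * c) • x₀ = 0 := by
      rw [sub_smul, one_smul, mul_smul, ← hc, ← hz, sub_self]
    have h1 : (1 : O) = π * c := by linear_combination hfree _ h2
    exact hπ.not_isUnit (IsUnit.of_mul_eq_one (a := π) c h1.symm)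
  -- π kills every element of (M/π)[m]
  have hπkill : ∀ y ∈ Submodule.torsionBySet H (M ⧸ (Ideal.span {algebraMap O H π} • (⊤ : Submodule H M))) (mI : Set H),
      π • y = 0 := by
    intro y hy
    rw [Submodule.mem_torsionBySet_iff] at hy
    have hmem : algebraMap O H π ∈ mI := by
      rw [hmI]
      exact Submodule.mem_sup_right (Ideal.subset_span rfl)
    have := hy ⟨algebraMap O H π, hmem⟩
    simpa [algebraMap_smul] using this
  constructor
  · apply le_antisymm
    · rintro y ⟨⟨x, hx⟩, rfl⟩
      exact hsub x hx
    · -- surjectivity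
      have hx₀m : (Submodule.mkQ (Ideal.span {algebraMap O H π} • (⊤ : Submodule H M))) x₀ ∈ Submodule.torsionBySet H (M ⧸ (Ideal.span {algebraMap O H π} • (⊤ : Submodule H M))) (mI : Set H) :=
        hsub x₀ hx₀
      obtain ⟨c, hc⟩ := hdim _ hx₀m
      have hcu : IsUnit c := by
        by_contra hcu
        have hdvd : π ∣ c := by
          have hmm : c ∈ IsLocalRing.maximalIdeal O :=
            (IsLocalRing.mem_maximalIdeal c).mpr hcu
          rwa [hπ.maximalIdeal_eq, Ideal.mem_span_singleton] at hmm
        obtain ⟨d, hd⟩ := hdvd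
        apply hx₀bar0
        rw [hc, hd, mul_smul, smul_comm, hπkill xbar hxbar, smul_zero]
      obtain ⟨u, rfl⟩ := hcu
      intro y hy
      obtain ⟨d, hd⟩ := hdim y hy
      have hxbar_eq : xbar = (↑u⁻¹ : O) • (Submodule.mkQ (Ideal.span {algebraMap O H π} • (⊤ : Submodule H M))) x₀ := by
        rw [hc, smul_smul]
        simp
      refine ⟨⟨(d * ↑u⁻¹) • x₀, Submodule.smul_of_tower_mem _ _ hx₀⟩, ?_⟩
      simp only [LinearMap.comp_apply, Submodule.subtype_apply]
      rw [hd, hxbar_eq, smul_smul, LinearMap.map_smul_of_tower]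
  · rintro y hy ⟨z, hz⟩
    have hz' : y = π • z := by rw [hz, algebraMap_smul]
    exact ⟨z, hquot π z hπ0 (hz' ▸ hy), hz⟩
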